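/- (Iwasawa decomposition) Every g ∈ G = SL(n, K) can be written g = p·a·v with p ∈ P = SL(n, O'), a ∈ A a diagonal matrix with entries of the form t^{i}u^{j} and determinant 1, and v ∈ U upper triangular unipotent; moreover the diagonal matrix a is uniquely determined by g, so G is the disjoint union of the sets PaU over a ∈ A. -/

import Mathlib

set_option synthInstance.maxHeartbeats 1000000
set_option maxHeartbeats 1000000

noncomputable section

open HahnSeries

namespace TwoDimLocal

variable (k : Type) [Field k]

/-- `k((u))`, the field of Laurent series over `k`. -/
abbrev K1 := LaurentSeries k

/-- `K = k((u))((t))`, the two-dimensional local field of iterated Laurent series. -/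
abbrev K := LaurentSeries (LaurentSeries k)

section Nonneg

variable (F : Type) [Field F]

lemma order_nonneg_of_support {x : LaurentSeries F} (hx : x ≠ 0)
    (h : ∀ n : ℤ, n < 0 → x.coeff n = 0) : 0 ≤ x.order := by
  by_contra hlt
  push_neg at hlt
  exact (HahnSeries.leadingCoeff_ne_zero.mpr hx) (by rw [HahnSeries.leadingCoeff_eq]; exact h x.order hlt)

/-- The subring `F[[X]] ⊆ F((X))` of power series, described by vanishing of the
coefficients of negative index. -/
def nonneg : Subring (LaurentSeries F) where
  carrier := {x | ∀ n : ℤ, n < 0 → x.coeff n = 0}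
  zero_mem' := by intro n _; simp
  one_mem' := by
    intro n hn
    rw [HahnSeries.coeff_one, if_neg (by omega)]
  add_mem' := by
    intro a b ha hb n hn
    rw [HahnSeries.coeff_add, ha n hn, hb n hn, add_zero]
  neg_mem' := by
    intro a ha n hn
    rw [HahnSeries.coeff_neg, ha n hn, neg_zero]
  mul_mem' := by
    intro a b ha hb n hn
    by_contra hne
    obtain ⟨i, hi, j, hj, rfl⟩ := support_mul_subset ((mem_support _ _).2 hne)
    rw [mem_support] at hi hj
    have hi0 : 0 ≤ i := by by_contra h; push_neg at h; exact hi (ha i h)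
    have hj0 : 0 ≤ j := by by_contra h; push_neg at h; exact hj (hb j h)
    exact absurd hn (not_lt.2 (add_nonneg hi0 hj0))

lemma mem_nonneg_iff {x : LaurentSeries F} :
    x ∈ nonneg F ↔ ∀ n : ℤ, n < 0 → x.coeff n = 0 := Iff.rfl

lemma coeff_zero_mul {x y : LaurentSeries F} (hx : x ∈ nonneg F) (hy : y ∈ nonneg F) :
    (x * y).coeff 0 = x.coeff 0 * y.coeff 0 := by
  rcases eq_or_ne x 0 with rfl | hx0
  · simp
  rcases eq_or_ne y 0 with rfl | hy0
  · simp
  have hxo : 0 ≤ x.order := order_nonneg_of_support F hx0 hx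
  have hyo : 0 ≤ y.order := order_nonneg_of_support F hy0 hy
  rcases lt_or_eq_of_le hxo with hxo' | hxo'
  · have h1 : x.coeff 0 = 0 := HahnSeries.coeff_eq_zero_of_lt_order hxo'
    have h2 : (x * y).coeff 0 = 0 := by
      apply HahnSeries.coeff_eq_zero_of_lt_order
      rw [HahnSeries.order_mul hx0 hy0]
      omega
    rw [h1, h2, zero_mul]
  rcases lt_or_eq_of_le hyo with hyo' | hyo'
  · have h1 : y.coeff 0 = 0 := HahnSeries.coeff_eq_zero_of_lt_order hyo'
    have h2 : (x * y).coeff 0 = 0 := by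
      apply HahnSeries.coeff_eq_zero_of_lt_order
      rw [HahnSeries.order_mul hx0 hy0]
      omega
    rw [h1, h2, mul_zero]
  have := HahnSeries.coeff_mul_order_add_order x y
  rw [HahnSeries.leadingCoeff_eq, HahnSeries.leadingCoeff_eq, ← hxo', ← hyo'] at this
  simpa using this

end Nonneg

/-- The ring of integers `O_K = k((u))[[t]]` of `K` with respect to the `t`-adic valuation. -/
def OK : Subring (K k) := nonneg (K1 k)

/-- The rank-2 valuation subring `O' = p⁻¹(k[[u]]) ⊆ K`, consisting of those `t`-adic
integers whose constant `t`-coefficient is a power series in `u`. -/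
def Oprime : Subring (K k) where
  carrier := {x | x ∈ OK k ∧ x.coeff 0 ∈ nonneg k}
  zero_mem' := ⟨Subring.zero_mem _, by simp⟩
  one_mem' := ⟨Subring.one_mem _, by
    intro n hn
    rw [show ((1 : K k).coeff 0) = 1 from by rw [HahnSeries.coeff_one]; simp]
    rw [HahnSeries.coeff_one, if_neg (by omega)]⟩
  add_mem' := by
    rintro a b ⟨ha1, ha2⟩ ⟨hb1, hb2⟩
    refine ⟨Subring.add_mem _ ha1 hb1, ?_⟩
    rw [HahnSeries.coeff_add]
    exact Subring.add_mem _ ha2 hb2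
  neg_mem' := by
    rintro a ⟨ha1, ha2⟩
    refine ⟨Subring.neg_mem _ ha1, ?_⟩
    rw [HahnSeries.coeff_neg]
    exact Subring.neg_mem _ ha2
  mul_mem' := by
    rintro a b ⟨ha1, ha2⟩ ⟨hb1, hb2⟩
    refine ⟨Subring.mul_mem _ ha1 hb1, ?_⟩
    rw [coeff_zero_mul (K1 k) ha1 hb1]
    exact Subring.mul_mem _ ha2 hb2

lemma Oprime_le_OK : (Oprime k : Set (K k)) ⊆ (OK k : Set (K k)) := fun _ h => h.1

/-- The local parameter `t` of `K = k((u))((t))`. -/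
def t : K k := HahnSeries.single (1 : ℤ) 1

/-- The local parameter `u` of `K = k((u))((t))`, i.e. the image in `K` of the
local parameter of `k((u))`. -/
def u : K k := HahnSeries.C (HahnSeries.single (1 : ℤ) (1 : k))

/-- The maximal ideal `m = p⁻¹(u·k[[u]])` of `O'`, as a subset of `K`. -/
def mSet : Set (K k) := {x | x ∈ Oprime k ∧ (x.coeff 0).coeff 0 = 0}

/-- The rank-two valuation `ν' : K* → ℤ ×ₗ ℤ`: the first component is the `t`-adic order,
the second one the `u`-adic order of the leading `t`-coefficient. (Junk value at `0`.) -/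
def nu (x : K k) : ℤ ×ₗ ℤ := toLex (x.order, (x.coeff x.order).order)

end TwoDimLocal

namespace TwoDimLocal

variable (k : Type) [Field k]

section LaurentAux

variable {F : Type} [Field F]

lemma coeff_order_eq_leading {x : LaurentSeries F} (hx : x ≠ 0) :
    x.coeff x.order = x.leadingCoeff := by
  rw [HahnSeries.leadingCoeff_eq]

lemma order_inv {x : LaurentSeries F} (hx : x ≠ 0) : x⁻¹.order = -x.order := by
  have hx' : x⁻¹ ≠ 0 := inv_ne_zero hx
  have h := HahnSeries.order_mul hx hx'
  rw [mul_inv_cancel₀ hx, HahnSeries.order_one] at h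
  omega

lemma coeff_order_inv {x : LaurentSeries F} (hx : x ≠ 0) :
    x⁻¹.coeff x⁻¹.order = (x.coeff x.order)⁻¹ := by
  have hx' : x⁻¹ ≠ 0 := inv_ne_zero hx
  have h := HahnSeries.coeff_mul_order_add_order x x⁻¹
  rw [mul_inv_cancel₀ hx] at h
  rw [order_inv hx, add_neg_cancel] at h
  rw [show ((1 : LaurentSeries F).coeff 0) = 1 from by
    rw [HahnSeries.coeff_one]; simp] at h
  rw [coeff_order_eq_leading hx, coeff_order_eq_leading hx']
  exact (inv_eq_of_mul_eq_one_right h.symm).symm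

lemma mem_nonneg_iff_of_ne {x : LaurentSeries F} (hx : x ≠ 0) :
    x ∈ nonneg F ↔ 0 ≤ x.order := by
  constructor
  · exact fun h => order_nonneg_of_support F hx h
  · intro h n hn
    exact HahnSeries.coeff_eq_zero_of_lt_order (lt_of_lt_of_le hn h)

end LaurentAux

lemma mem_Oprime' {x : K k} :
    x ∈ Oprime k ↔ x ∈ OK k ∧ x.coeff 0 ∈ nonneg k := Iff.rfl

lemma mem_Oprime_iff_orders {x : K k} (hx : x ≠ 0) :
    x ∈ Oprime k ↔ 0 ≤ x.order ∧ 0 ≤ (x.coeff 0).order := by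
  rw [mem_Oprime']
  constructor
  · rintro ⟨h1, h2⟩
    refine ⟨order_nonneg_of_support _ hx h1, ?_⟩
    rcases eq_or_ne (x.coeff 0) 0 with h | h
    · rw [h, HahnSeries.order_zero]
    · exact order_nonneg_of_support _ h h2
  · rintro ⟨h1, h2⟩
    refine ⟨fun n hn => HahnSeries.coeff_eq_zero_of_lt_order (lt_of_lt_of_le hn h1), ?_⟩
    rcases eq_or_ne (x.coeff 0) 0 with h | h
    · rw [h]; exact fun n hn => rfl
    · intro n hn
      exact HahnSeries.coeff_eq_zero_of_lt_order (lt_of_lt_of_le hn h2)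

lemma mem_or_inv_mem {x : K k} (hx : x ≠ 0) : x ∈ Oprime k ∨ x⁻¹ ∈ Oprime k := by
  have hx' : x⁻¹ ≠ 0 := inv_ne_zero (G₀ := K k) hx
  rcases lt_trichotomy x.order 0 with hd | hd | hd
  · right
    rw [mem_Oprime_iff_orders k hx', order_inv hx]
    have h0 : (x⁻¹).coeff 0 = 0 := by
      apply HahnSeries.coeff_eq_zero_of_lt_order
      rw [order_inv hx]; omega
    rw [h0, HahnSeries.order_zero]
    omega
  · have hc : x.coeff 0 ≠ 0 := by
      rw [← hd]; exact (by rw [← HahnSeries.leadingCoeff_eq]; exact HahnSeries.leadingCoeff_ne_zero.mpr hx)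
    rcases le_or_gt 0 (x.coeff 0).order with hj | hj
    · left
      rw [mem_Oprime_iff_orders k hx]
      exact ⟨hd.ge, hj⟩
    · right
      rw [mem_Oprime_iff_orders k hx']
      have ho : (x⁻¹).order = 0 := by rw [order_inv hx, hd, neg_zero]
      have hco : (x⁻¹).coeff 0 = (x.coeff 0)⁻¹ := by
        have := coeff_order_inv hx
        rwa [ho, hd] at this
      rw [ho, hco, order_inv hc]
      omega
  · left
    rw [mem_Oprime_iff_orders k hx]
    have h0 : x.coeff 0 = 0 := HahnSeries.coeff_eq_zero_of_lt_order hd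
    rw [h0, HahnSeries.order_zero]
    omega

lemma div_mem_or_div_mem {x y : K k} (hx : x ≠ 0) (hy : y ≠ 0) :
    x / y ∈ Oprime k ∨ y / x ∈ Oprime k := by
  have h2 : (x / y)⁻¹ = y / x := inv_div x y
  have := mem_or_inv_mem k (div_ne_zero (G₀ := K k) hx hy)
  rwa [h2] at this

end TwoDimLocal

namespace TwoDimLocal

variable (k : Type) [Field k]

/-- The monomial `t^i u^j` as an element of `K`. -/
def mono (i j : ℤ) : K k := HahnSeries.single i (HahnSeries.single j (1 : k))

lemma mono_ne_zero (i j : ℤ) : mono k i j ≠ 0 :=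
  HahnSeries.single_ne_zero (HahnSeries.single_ne_zero one_ne_zero)

lemma mono_mul (i j i' j' : ℤ) : mono k i j * mono k i' j' = mono k (i + i') (j + j') := by
  unfold mono
  rw [HahnSeries.single_mul_single, HahnSeries.single_mul_single, mul_one]

lemma mono_zero : mono k 0 0 = 1 := by
  unfold mono
  rw [HahnSeries.single_zero_one, HahnSeries.single_zero_one]

lemma mono_mul_mono_eq_one (i j : ℤ) : mono k i j * mono k (-i) (-j) = 1 := by
  rw [mono_mul, add_neg_cancel, add_neg_cancel, mono_zero]

lemma mono_inv (i j : ℤ) : (mono k i j)⁻¹ = mono k (-i) (-j) :=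
  @inv_eq_of_mul_eq_one_right (K k) _ _ _ (mono_mul_mono_eq_one k i j)

lemma mono_order (i j : ℤ) : (mono k i j).order = i :=
  HahnSeries.order_single (HahnSeries.single_ne_zero one_ne_zero)

lemma mono_leadingCoeff (i j : ℤ) :
    (mono k i j).coeff (mono k i j).order = HahnSeries.single j (1 : k) := by
  rw [mono_order]
  exact HahnSeries.coeff_single_same _ _

lemma mono_exponents_eq_zero {i j : ℤ} (h1 : mono k i j ∈ Oprime k)
    (h2 : mono k (-i) (-j) ∈ Oprime k) : i = 0 ∧ j = 0 := by
  rw [mem_Oprime_iff_orders k (mono_ne_zero k i j), mono_order] at h1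
  rw [mem_Oprime_iff_orders k (mono_ne_zero k (-i) (-j)), mono_order] at h2
  have hi : i = 0 := by omega
  subst hi
  simp only [neg_zero] at h2
  have c1 : (mono k 0 j).coeff 0 = HahnSeries.single j (1 : k) := by
    have := mono_leadingCoeff k 0 j
    rwa [mono_order] at this
  have c2 : (mono k 0 (-j)).coeff 0 = HahnSeries.single (-j) (1 : k) := by
    have := mono_leadingCoeff k 0 (-j)
    rwa [mono_order] at this
  rw [c1, HahnSeries.order_single (one_ne_zero)] at h1
  rw [c2, HahnSeries.order_single (one_ne_zero)] at h2
  omega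

lemma t_pow_nat (m : ℕ) : t k ^ m = mono k m 0 := by
  unfold t mono
  rw [HahnSeries.single_pow, one_pow, nsmul_eq_mul, mul_one, HahnSeries.single_zero_one]

lemma u_pow_nat (m : ℕ) : u k ^ m = mono k 0 m := by
  unfold u mono
  rw [show (HahnSeries.C (HahnSeries.single (1:ℤ) (1:k)) : K k)
      = HahnSeries.single (0 : ℤ) (HahnSeries.single (1:ℤ) (1:k)) from rfl]
  rw [HahnSeries.single_pow, HahnSeries.single_pow, one_pow]
  norm_num

lemma t_zpow (i : ℤ) : t k ^ i = mono k i 0 := by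
  cases i with
  | ofNat m => rw [Int.ofNat_eq_natCast, zpow_natCast, t_pow_nat]
  | negSucc m =>
    rw [zpow_negSucc, t_pow_nat]
    refine @inv_eq_of_mul_eq_one_right (K k) _ _ _ ?_
    rw [mono_mul]
    rw [show ((m + 1 : ℕ) : ℤ) + Int.negSucc m = 0 from by rw [Int.negSucc_eq]; push_cast; ring, add_zero, mono_zero]

lemma u_zpow (j : ℤ) : u k ^ j = mono k 0 j := by
  cases j with
  | ofNat m => rw [Int.ofNat_eq_natCast, zpow_natCast, u_pow_nat]
  | negSucc m =>
    rw [zpow_negSucc, u_pow_nat]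
    refine @inv_eq_of_mul_eq_one_right (K k) _ _ _ ?_
    rw [mono_mul]
    rw [show ((m + 1 : ℕ) : ℤ) + Int.negSucc m = 0 from by rw [Int.negSucc_eq]; push_cast; ring, add_zero, mono_zero]

lemma t_zpow_mul_u_zpow (i j : ℤ) : t k ^ i * u k ^ j = mono k i j := by
  rw [t_zpow, u_zpow, mono_mul, add_zero, zero_add]

/-- Factorization of a nonzero element of `K` into a unit of `O'` and a monomial. -/
lemma exists_factor {x : K k} (hx : x ≠ 0) :
    ∃ w : K k, ∃ e : ℤ × ℤ, w ∈ Oprime k ∧ w⁻¹ ∈ Oprime k ∧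
      x = w * mono k e.1 e.2 := by
  set i := x.order with hi
  set c := x.coeff x.order with hc
  have hcne : c ≠ 0 := by rw [hc, ← HahnSeries.leadingCoeff_eq]; exact HahnSeries.leadingCoeff_ne_zero.mpr hx
  set j := c.order with hj
  have hxi : x⁻¹ ≠ 0 := inv_ne_zero (G₀ := K k) hx
  have h3 : mono k (-i) (-j) * mono k i j = 1 := by
    rw [mono_mul]
    rw [show (-i + i) = 0 from by omega, show (-j + j) = 0 from by omega, mono_zero]
  refine ⟨x * mono k (-i) (-j), (i, j), ?_, ?_, ?_⟩
  · -- w ∈ O'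
    have hw : x * mono k (-i) (-j) ≠ 0 := mul_ne_zero hx (mono_ne_zero k _ _)
    rw [mem_Oprime_iff_orders k hw]
    have ho : (x * mono k (-i) (-j)).order = 0 := by
      rw [HahnSeries.order_mul hx (mono_ne_zero k _ _), mono_order]; omega
    have hlc := HahnSeries.coeff_mul_order_add_order x (mono k (-i) (-j))
    rw [← coeff_order_eq_leading hx, ← coeff_order_eq_leading (mono_ne_zero k (-i) (-j)),
      mono_leadingCoeff, mono_order] at hlc
    have hidx : x.order + (-i) = (0 : ℤ) := by omega
    rw [hidx] at hlc
    rw [ho, hlc, HahnSeries.order_mul hcne (HahnSeries.single_ne_zero one_ne_zero),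
      HahnSeries.order_single (one_ne_zero : (1:k) ≠ 0)]
    omega
  · -- w⁻¹ ∈ O'
    have key : (x * mono k (-i) (-j)) * (x⁻¹ * mono k i j) = 1 := by
      have h2 : x * x⁻¹ = 1 := @mul_inv_cancel₀ (K k) _ x hx
      calc (x * mono k (-i) (-j)) * (x⁻¹ * mono k i j)
          = (x * x⁻¹) * (mono k (-i) (-j) * mono k i j) := by ring
        _ = 1 := by rw [h2, h3]; exact one_mul (1 : K k)
    have hwinv : (x * mono k (-i) (-j))⁻¹ = x⁻¹ * mono k i j :=
      @inv_eq_of_mul_eq_one_right (K k) _ _ _ key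
    rw [hwinv]
    have hw : x⁻¹ * mono k i j ≠ 0 := mul_ne_zero hxi (mono_ne_zero k _ _)
    rw [mem_Oprime_iff_orders k hw]
    have hoi : x⁻¹.order = -i := order_inv hx
    have ho : (x⁻¹ * mono k i j).order = 0 := by
      rw [HahnSeries.order_mul hxi (mono_ne_zero k _ _), mono_order]; omega
    have hlc := HahnSeries.coeff_mul_order_add_order x⁻¹ (mono k i j)
    rw [← coeff_order_eq_leading hxi, ← coeff_order_eq_leading (mono_ne_zero k i j),
      mono_leadingCoeff, mono_order, coeff_order_inv hx] at hlc
    have hidx : x⁻¹.order + i = (0 : ℤ) := by omega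
    rw [hidx] at hlc
    rw [ho, hlc, HahnSeries.order_mul (inv_ne_zero hcne)
      (HahnSeries.single_ne_zero one_ne_zero),
      HahnSeries.order_single (one_ne_zero : (1:k) ≠ 0), order_inv hcne]
    omega
  · show x = x * mono k (-i) (-j) * mono k i j
    calc x = x * 1 := (mul_one x).symm
      _ = x * (mono k (-i) (-j) * mono k i j) := by rw [h3]
      _ = x * mono k (-i) (-j) * mono k i j := by ring

end TwoDimLocal

namespace TwoDimLocal

section Generic

open Matrix

lemma matrix_mul_mem {R : Type} [CommRing R] (S : Subring R) {m : Type} [Fintype m]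
    {A B : Matrix m m R} (hA : ∀ i j, A i j ∈ S) (hB : ∀ i j, B i j ∈ S) :
    ∀ i j, (A * B) i j ∈ S := by
  intro i j
  rw [Matrix.mul_apply]
  exact Subring.sum_mem _ fun l _ => Subring.mul_mem _ (hA i l) (hB l j)

lemma matrix_det_mem {R : Type} [CommRing R] (S : Subring R) {m : Type} [Fintype m]
    [DecidableEq m] {A : Matrix m m R} (hA : ∀ i j, A i j ∈ S) : A.det ∈ S := by
  rw [Matrix.det_apply]
  refine Subring.sum_mem _ fun σ _ => ?_
  rw [Units.smul_def]
  exact Subring.zsmul_mem _ (Subring.prod_mem _ fun i _ => hA _ _) _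

lemma matrix_adjugate_mem {R : Type} [CommRing R] (S : Subring R) {m : Type} [Fintype m]
    [DecidableEq m] {A : Matrix m m R} (hA : ∀ i j, A i j ∈ S) :
    ∀ i j, A.adjugate i j ∈ S := by
  intro i j
  rw [Matrix.adjugate_apply]
  apply matrix_det_mem
  intro a b
  rw [Matrix.updateRow_apply]
  split
  · rw [Pi.single_apply]
    split
    · exact Subring.one_mem _
    · exact Subring.zero_mem _
  · exact hA a b

variable {F : Type} [Field F] (O : Subring F)

lemma pivot_aux (hO : ∀ x : F, x ≠ 0 → x ∈ O ∨ x⁻¹ ∈ O) {ι : Type} [DecidableEq ι]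
    (s : Finset ι) (f : ι → F) (hs : s.Nonempty) (hf : ∀ i ∈ s, f i ≠ 0) :
    ∃ i0 ∈ s, ∀ i ∈ s, f i / f i0 ∈ O := by
  induction s using Finset.induction_on with
  | empty => simp at hs
  | @insert a s' ha ih =>
    rcases s'.eq_empty_or_nonempty with rfl | hs'
    · refine ⟨a, Finset.mem_insert_self _ _, ?_⟩
      intro i hi
      rcases Finset.mem_insert.mp hi with rfl | hi
      · rw [div_self (hf i (Finset.mem_insert_self _ _))]; exact O.one_mem
      · simp at hi
    · obtain ⟨i0, hi0s, hdiv⟩ := ih hs' (fun i hi => hf i (Finset.mem_insert_of_mem hi))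
      have hfa : f a ≠ 0 := hf a (Finset.mem_insert_self _ _)
      have hfi0 : f i0 ≠ 0 := hf i0 (Finset.mem_insert_of_mem hi0s)
      have hcomp := hO (f a / f i0) (div_ne_zero hfa hfi0)
      rw [inv_div] at hcomp
      rcases hcomp with h | h
      · refine ⟨i0, Finset.mem_insert_of_mem hi0s, ?_⟩
        intro i hi
        rcases Finset.mem_insert.mp hi with rfl | hi
        · exact h
        · exact hdiv i hi
      · refine ⟨a, Finset.mem_insert_self _ _, ?_⟩
        intro i hi
        rcases Finset.mem_insert.mp hi with rfl | hi
        · rw [div_self hfa]; exact O.one_mem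
        · have heq : f i / f a = f i / f i0 * (f i0 / f a) := by
            field_simp
          rw [heq]
          exact O.mul_mem (hdiv i hi) h

lemma pivot {m : ℕ} (hO : ∀ x : F, x ≠ 0 → x ∈ O ∨ x⁻¹ ∈ O)
    (f : Fin m → F) (hf : ∃ i, f i ≠ 0) :
    ∃ i0, f i0 ≠ 0 ∧ ∀ i, f i / f i0 ∈ O := by
  classical
  obtain ⟨iw, hiw⟩ := hf
  have hs : (Finset.univ.filter (fun i => f i ≠ 0)).Nonempty :=
    ⟨iw, by simp [hiw]⟩
  obtain ⟨i0, hi0, hdiv⟩ := pivot_aux O hO _ f hs (fun i hi => (Finset.mem_filter.mp hi).2)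
  refine ⟨i0, (Finset.mem_filter.mp hi0).2, fun i => ?_⟩
  by_cases h : f i = 0
  · rw [h, zero_div]; exact O.zero_mem
  · exact hdiv i (Finset.mem_filter.mpr ⟨Finset.mem_univ _, h⟩)

lemma triangularize (hO : ∀ x : F, x ≠ 0 → x ∈ O ∨ x⁻¹ ∈ O) :
    ∀ (m : ℕ) (g : Matrix (Fin m) (Fin m) F), g.det ≠ 0 →
    ∃ q : Matrix (Fin m) (Fin m) F, (∀ i j, q i j ∈ O) ∧ q.det = 1 ∧
      ∀ i j : Fin m, j < i → (q * g) i j = 0 := by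
  intro m
  induction m with
  | zero =>
    intro g _
    exact ⟨1, fun i => i.elim0, Matrix.det_one, fun i => i.elim0⟩
  | succ n ih =>
    intro g hg
    classical
    have hcol : ∃ i, g i 0 ≠ 0 := by
      by_contra h
      push_neg at h
      exact hg (Matrix.det_eq_zero_of_column_eq_zero 0 h)
    obtain ⟨i0, hi0, hpiv⟩ := pivot O hO (fun i => g i 0) hcol
    set σ : Equiv.Perm (Fin (n+1)) := Equiv.swap 0 i0 with hσ
    set ε : F := if i0 = 0 then 1 else -1 with hε
    set d : Fin (n+1) → F := fun i => if i = 0 then ε else 1 with hd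
    set q1 : Matrix (Fin (n+1)) (Fin (n+1)) F :=
      Matrix.of fun i j => if j = σ i then d i else 0 with hq1
    have hdvals : ∀ i, d i = 1 ∨ d i = -1 := by
      intro i; rw [hd]; dsimp only
      split
      · rw [hε]; split <;> simp
      · simp
    have hdne : ∀ i, d i ≠ 0 := by
      intro i; rcases hdvals i with h | h <;> rw [h] <;> simp
    have hdO : ∀ i, d i ∈ O := by
      intro i; rcases hdvals i with h | h <;> rw [h]
      · exact O.one_mem
      · exact O.neg_mem O.one_mem
    have hdinv : ∀ i, (d i)⁻¹ = d i := by
      intro i; rcases hdvals i with h | h <;> rw [h] <;> norm_num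
    have hq1O : ∀ i j, q1 i j ∈ O := by
      intro i j; rw [hq1]; dsimp only [Matrix.of_apply]
      split
      · exact hdO i
      · exact O.zero_mem
    have hq1det : q1.det = 1 := by
      have hq1eq : q1 = (Matrix.diagonal (fun i => d (σ.symm i))).submatrix σ id := by
        ext i j
        rw [hq1]
        rw [Matrix.of_apply, Matrix.submatrix_apply, id_eq, Matrix.diagonal_apply,
          Equiv.symm_apply_apply]
        by_cases h : j = σ i
        · rw [if_pos h, if_pos h.symm]
        · rw [if_neg h, if_neg (Ne.symm h)]
      rw [hq1eq, Matrix.det_permute, Matrix.det_diagonal]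
      rw [Equiv.prod_comp σ.symm d]
      have hprod : ∏ i, d i = ε := by
        rw [hd]
        rw [Finset.prod_ite_eq' Finset.univ (0 : Fin (n+1)) (fun _ => ε)]
        rw [if_pos (Finset.mem_univ _)]
      rw [hprod, hσ, hε]
      by_cases h0 : i0 = 0
      · subst h0
        rw [Equiv.swap_self, if_pos rfl]
        simp
      · rw [Equiv.Perm.sign_swap (Ne.symm h0), if_neg h0]
        simp
    have hM1 : ∀ i j, (q1 * g) i j = d i * g (σ i) j := by
      intro i j
      rw [Matrix.mul_apply]
      have hterm : ∀ l, q1 i l * g l j = if l = σ i then d i * g l j else 0 := by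
        intro l; rw [hq1]; rw [Matrix.of_apply]
        split <;> simp
      rw [Finset.sum_congr rfl (fun l _ => hterm l),
        Finset.sum_ite_eq' Finset.univ (σ i) (fun l => d i * g l j),
        if_pos (Finset.mem_univ _)]
    have hσ0 : σ 0 = i0 := by rw [hσ]; exact Equiv.swap_apply_left _ _
    have hM100 : (q1 * g) 0 0 ≠ 0 := by
      rw [hM1 0 0, hσ0]
      exact mul_ne_zero (hdne 0) hi0
    have hM1div : ∀ i, (q1 * g) i 0 / (q1 * g) 0 0 ∈ O := by
      intro i
      rw [hM1, hM1, hσ0]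
      have h1 : d i * g (σ i) 0 / (d 0 * g i0 0) = (d i / d 0) * (g (σ i) 0 / g i0 0) :=
        (div_mul_div_comm _ _ _ _).symm
      rw [h1]
      refine O.mul_mem ?_ (hpiv (σ i))
      rw [div_eq_mul_inv, hdinv 0]
      exact O.mul_mem (hdO i) (hdO 0)
    set c : Fin (n+1) → F :=
      fun i => if i = 0 then 0 else -((q1 * g) i 0 / (q1 * g) 0 0) with hcdef
    set L : Matrix (Fin (n+1)) (Fin (n+1)) F :=
      Matrix.of fun i j => (if j = i then 1 else 0) + (if j = 0 then c i else 0) with hLdef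
    have hcO : ∀ i, c i ∈ O := by
      intro i; rw [hcdef]; dsimp only
      split
      · exact O.zero_mem
      · exact O.neg_mem (hM1div i)
    have hLO : ∀ i j, L i j ∈ O := by
      intro i j; rw [hLdef]; rw [Matrix.of_apply]
      refine O.add_mem ?_ ?_
      · split
        · exact O.one_mem
        · exact O.zero_mem
      · split
        · exact hcO i
        · exact O.zero_mem
    have hLdiag : ∀ i, L i i = 1 := by
      intro i; rw [hLdef]; rw [Matrix.of_apply, if_pos rfl]
      by_cases h : i = 0
      · subst h
        rw [if_pos rfl, hcdef]; dsimp only; rw [if_pos rfl, add_zero]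
      · rw [if_neg h, add_zero]
    have hLtri : L.BlockTriangular OrderDual.toDual := by
      intro i j hij
      have hij' : i < j := hij
      rw [hLdef]; rw [Matrix.of_apply]
      rw [if_neg (fun h => absurd hij' (by rw [h]; exact lt_irrefl i)),
        if_neg (fun h => absurd hij' (by rw [h]; exact Fin.not_lt_zero i)), add_zero]
    have hLdet : L.det = 1 := by
      rw [Matrix.det_of_lowerTriangular L hLtri]
      rw [Finset.prod_congr rfl (fun i _ => hLdiag i), Finset.prod_const_one]
    have hM : ∀ i j, (L * (q1 * g)) i j = (q1 * g) i j + c i * (q1 * g) 0 j := by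
      intro i j
      rw [Matrix.mul_apply]
      have hterm : ∀ l, L i l * (q1 * g) l j
          = (if l = i then (q1 * g) l j else 0) + (if l = 0 then c i * (q1 * g) l j else 0) := by
        intro l; rw [hLdef]; rw [Matrix.of_apply, add_mul]
        congr 1
        · split <;> simp
        · split <;> simp
      rw [Finset.sum_congr rfl (fun l _ => hterm l), Finset.sum_add_distrib,
        Finset.sum_ite_eq' Finset.univ i (fun l => (q1 * g) l j),
        Finset.sum_ite_eq' Finset.univ (0 : Fin (n+1)) (fun l => c i * (q1 * g) l j),
        if_pos (Finset.mem_univ _), if_pos (Finset.mem_univ _)]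
    have hMcol : ∀ i, i ≠ 0 → (L * (q1 * g)) i 0 = 0 := by
      intro i hi
      rw [hM, hcdef]
      dsimp only
      rw [if_neg hi, neg_mul, div_mul_cancel₀ _ hM100, add_neg_cancel]
    set M := L * (q1 * g) with hMdef
    set B := M.submatrix Fin.succ Fin.succ with hBdef
    have hMB : M.det = M 0 0 * B.det := by
      rw [Matrix.det_succ_column_zero, Fin.sum_univ_succ]
      rw [Finset.sum_eq_zero (fun i _ => by
        rw [hMcol _ (Fin.succ_ne_zero i)]; ring)]
      rw [add_zero, hBdef]
      simp [Fin.succAbove_zero]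
    have hMdet_ne : M.det ≠ 0 := by
      rw [hMdef, Matrix.det_mul, Matrix.det_mul, hLdet, hq1det, one_mul, one_mul]
      exact hg
    have hBdet : B.det ≠ 0 := fun h => hMdet_ne (by rw [hMB, h, mul_zero])
    obtain ⟨r, hrO, hrdet, hrtri⟩ := ih B hBdet
    set r' : Matrix (Fin (n+1)) (Fin (n+1)) F := Matrix.of fun i j =>
      if hi : i = 0 then (if j = 0 then 1 else 0)
      else if hj : j = 0 then 0 else r (i.pred hi) (j.pred hj) with hr'def
    have hr'00 : r' 0 0 = (1 : F) := by rw [hr'def]; simp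
    have hr'succ0 : ∀ i : Fin n, r' i.succ 0 = 0 := by
      intro i; rw [hr'def]; simp [Fin.succ_ne_zero i]
    have hr'succ : ∀ i j : Fin n, r' i.succ j.succ = r i j := by
      intro i j; rw [hr'def]; simp [Fin.succ_ne_zero i, Fin.succ_ne_zero j]
    have hr'O : ∀ i j, r' i j ∈ O := by
      intro i j; rw [hr'def]; rw [Matrix.of_apply]
      split
      · split
        · exact O.one_mem
        · exact O.zero_mem
      · split
        · exact O.zero_mem
        · exact hrO _ _
    have hr'sub : r'.submatrix Fin.succ Fin.succ = r := by
      ext i j; rw [Matrix.submatrix_apply]; exact hr'succ i j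
    have hr'det : r'.det = 1 := by
      rw [Matrix.det_succ_column_zero, Fin.sum_univ_succ]
      rw [Finset.sum_eq_zero (fun i _ => by rw [hr'succ0 i]; ring), add_zero]
      simp [Fin.succAbove_zero, hr'sub, hr'00, hrdet]
    refine ⟨r' * (L * q1), ?_, ?_, ?_⟩
    · exact matrix_mul_mem O hr'O (matrix_mul_mem O hLO hq1O)
    · rw [Matrix.det_mul, Matrix.det_mul, hr'det, hLdet, hq1det]; ring
    · intro i j hij
      have hassoc : r' * (L * q1) * g = r' * M := by
        rw [hMdef, Matrix.mul_assoc, Matrix.mul_assoc]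
      rw [hassoc]
      rcases Fin.eq_zero_or_eq_succ i with rfl | ⟨i', rfl⟩
      · exact absurd hij (Fin.not_lt_zero j)
      rw [Matrix.mul_apply, Fin.sum_univ_succ, hr'succ0 i', zero_mul, zero_add]
      rcases Fin.eq_zero_or_eq_succ j with rfl | ⟨j', rfl⟩
      · exact Finset.sum_eq_zero fun l _ => by
          rw [hMcol _ (Fin.succ_ne_zero l), mul_zero]
      · have hj'i' : j' < i' := Fin.succ_lt_succ_iff.mp hij
        have hsum : ∀ l : Fin n, r' i'.succ l.succ * M l.succ j'.succ = r i' l * B l j' := by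
          intro l; rw [hr'succ, hBdef, Matrix.submatrix_apply]
        rw [Finset.sum_congr rfl (fun l _ => hsum l)]
        have htr := hrtri i' j' hj'i'
        rw [Matrix.mul_apply] at htr
        exact htr

end Generic

end TwoDimLocal

namespace TwoDimLocal

section Generic2

open Matrix

variable {F : Type} [Field F] (O : Subring F) {Λ : Type} [AddCommGroup Λ]

lemma tri_mul_diag {m : ℕ} {A B : Matrix (Fin m) (Fin m) F}
    (hA : A.BlockTriangular id) (hB : B.BlockTriangular id) (i : Fin m) :
    (A * B) i i = A i i * B i i := by
  rw [Matrix.mul_apply]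
  rw [Finset.sum_eq_single i ?h1 ?h2]
  case h1 =>
    intro l _ hl
    rcases lt_or_gt_of_ne hl with h | h
    · rw [hA (show (id l : Fin m) < id i from h), zero_mul]
    · rw [hB (show (id i : Fin m) < id l from h), mul_zero]
  case h2 => intro h; exact absurd (Finset.mem_univ i) h

lemma mu_sum (μ : Λ → F) (hμzero : μ 0 = 1) (hμadd : ∀ a b, μ (a + b) = μ a * μ b)
    {ι : Type} (s : Finset ι) (f : ι → Λ) :
    μ (∑ i ∈ s, f i) = ∏ i ∈ s, μ (f i) := by
  induction s using Finset.cons_induction with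
  | empty => simpa using hμzero
  | cons a s' ha ih => rw [Finset.sum_cons, Finset.prod_cons, hμadd, ih]

lemma diag_exponents_unique (μ : Λ → F) (hμzero : μ 0 = 1)
    (hμadd : ∀ a b, μ (a + b) = μ a * μ b) (hμne : ∀ a, μ a ≠ 0)
    (hμrigid : ∀ a, μ a ∈ O → μ (-a) ∈ O → a = 0)
    {n : ℕ} {p p' v v' : Matrix (Fin n) (Fin n) F} {e e' : Fin n → Λ}
    (hpO : ∀ i j, p i j ∈ O) (hpdet : p.det = 1)
    (hp'O : ∀ i j, p' i j ∈ O) (hp'det : p'.det = 1)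
    (hv : (∀ i, v i i = 1) ∧ ∀ i j : Fin n, j < i → v i j = 0)
    (hv' : (∀ i, v' i i = 1) ∧ ∀ i j : Fin n, j < i → v' i j = 0)
    (heq : p * Matrix.diagonal (fun i => μ (e i)) * v
        = p' * Matrix.diagonal (fun i => μ (e' i)) * v') :
    e = e' := by
  have hμinv : ∀ a, (μ a)⁻¹ = μ (-a) := fun a =>
    inv_eq_of_mul_eq_one_right (by rw [← hμadd, add_neg_cancel, hμzero])
  set T := Matrix.diagonal (fun i => μ (e i)) * v with hTdef
  set T' := Matrix.diagonal (fun i => μ (e' i)) * v' with hT'def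
  have hTtri : T.BlockTriangular id :=
    (Matrix.blockTriangular_diagonal _).mul (fun i j h => hv.2 i j h)
  have hT'tri : T'.BlockTriangular id :=
    (Matrix.blockTriangular_diagonal _).mul (fun i j h => hv'.2 i j h)
  have hTdiag : ∀ i, T i i = μ (e i) := by
    intro i; rw [hTdef, Matrix.diagonal_mul, hv.1 i, mul_one]
  have hT'diag : ∀ i, T' i i = μ (e' i) := by
    intro i; rw [hT'def, Matrix.diagonal_mul, hv'.1 i, mul_one]
  have hTdet : T.det = ∏ i, μ (e i) := by
    rw [Matrix.det_of_upperTriangular hTtri]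
    exact Finset.prod_congr rfl fun i _ => hTdiag i
  have hTunit : IsUnit T.det := by
    rw [hTdet, isUnit_iff_ne_zero]
    exact Finset.prod_ne_zero_iff.mpr fun i _ => hμne _
  haveI : Invertible T := T.invertibleOfIsUnitDet hTunit
  have hTinvtri : (T⁻¹).BlockTriangular id :=
    Matrix.blockTriangular_inv_of_blockTriangular hTtri
  have hTinv_diag : ∀ i, T⁻¹ i i = (T i i)⁻¹ := by
    intro i
    have h : T i i * T⁻¹ i i = 1 := by
      rw [← tri_mul_diag hTtri hTinvtri i, Matrix.mul_nonsing_inv T hTunit,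
        Matrix.one_apply_eq]
    exact (inv_eq_of_mul_eq_one_right h).symm
  have hp'unit : IsUnit p'.det := by rw [hp'det]; exact isUnit_one
  have hpunit : IsUnit p.det := by rw [hpdet]; exact isUnit_one
  set X := p'⁻¹ * p with hXdef
  have heq' : p * T = p' * T' := by
    rw [hTdef, hT'def, ← Matrix.mul_assoc, ← Matrix.mul_assoc]; exact heq
  have hX : X * T = T' := by
    rw [hXdef, Matrix.mul_assoc, heq', ← Matrix.mul_assoc,
      Matrix.nonsing_inv_mul p' hp'unit, Matrix.one_mul]
  have hp'inv_adj : p'⁻¹ = p'.adjugate := by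
    rw [Matrix.inv_def, hp'det, Ring.inverse_one, one_smul]
  have hpinv_adj : p⁻¹ = p.adjugate := by
    rw [Matrix.inv_def, hpdet, Ring.inverse_one, one_smul]
  have hXO : ∀ i j, X i j ∈ O := by
    refine matrix_mul_mem O ?_ hpO
    intro i j; rw [hp'inv_adj]; exact matrix_adjugate_mem O hp'O i j
  have hXinv_eq : X⁻¹ = p⁻¹ * p' := by
    rw [hXdef, Matrix.mul_inv_rev, Matrix.nonsing_inv_nonsing_inv p' hp'unit]
  have hXinvO : ∀ i j, X⁻¹ i j ∈ O := by
    rw [hXinv_eq]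
    refine matrix_mul_mem O ?_ hp'O
    intro i j; rw [hpinv_adj]; exact matrix_adjugate_mem O hpO i j
  have hXeq : X = T' * T⁻¹ := by
    rw [← hX, Matrix.mul_nonsing_inv_cancel_right _ _ hTunit]
  have hXtri : X.BlockTriangular id := by
    rw [hXeq]; exact hT'tri.mul hTinvtri
  have hXunit : IsUnit X.det := by
    rw [hXdef, Matrix.det_mul, Matrix.det_nonsing_inv, hp'det, hpdet,
      Ring.inverse_one, one_mul]
    exact isUnit_one
  haveI : Invertible X := X.invertibleOfIsUnitDet hXunit
  have hXinvtri : (X⁻¹).BlockTriangular id :=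
    Matrix.blockTriangular_inv_of_blockTriangular hXtri
  have hXdiag : ∀ i, X i i = μ (e' i - e i) := by
    intro i
    rw [hXeq, tri_mul_diag hT'tri hTinvtri i, hT'diag, hTinv_diag, hTdiag, hμinv,
      ← hμadd, ← sub_eq_add_neg]
  have hXinv_diag : ∀ i, X⁻¹ i i = μ (-(e' i - e i)) := by
    intro i
    have h : X i i * X⁻¹ i i = 1 := by
      rw [← tri_mul_diag hXtri hXinvtri i, Matrix.mul_nonsing_inv X hXunit,
        Matrix.one_apply_eq]
    rw [← (inv_eq_of_mul_eq_one_right h), hXdiag, hμinv]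
  funext i
  have h1 : μ (e' i - e i) ∈ O := by rw [← hXdiag]; exact hXO i i
  have h2 : μ (-(e' i - e i)) ∈ O := by rw [← hXinv_diag]; exact hXinvO i i
  have h0 := hμrigid _ h1 h2
  have : e' i = e i := by
    have := sub_eq_zero.mp h0
    exact this
  rw [this]

theorem generic_iwasawa (hO : ∀ x : F, x ≠ 0 → x ∈ O ∨ x⁻¹ ∈ O)
    (μ : Λ → F) (hμzero : μ 0 = 1) (hμadd : ∀ a b, μ (a + b) = μ a * μ b)
    (hμne : ∀ a, μ a ≠ 0) (hμrigid : ∀ a, μ a ∈ O → μ (-a) ∈ O → a = 0)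
    (hfac : ∀ x : F, x ≠ 0 → ∃ w : F, ∃ a : Λ, w ∈ O ∧ w⁻¹ ∈ O ∧ x = w * μ a)
    {n : ℕ} (g : Matrix (Fin n) (Fin n) F) (hg : g.det = 1) :
    ∃! e : Fin n → Λ, ∃ p : Matrix (Fin n) (Fin n) F, ∃ v : Matrix (Fin n) (Fin n) F,
      ((∀ i j, p i j ∈ O) ∧ p.det = 1) ∧
      ((∀ i, v i i = 1) ∧ ∀ i j : Fin n, j < i → v i j = 0) ∧
      g = p * Matrix.diagonal (fun i => μ (e i)) * v := by
  classical
  obtain ⟨q, hqO, hqdet, hqtri⟩ := triangularize O hO n g (by rw [hg]; exact one_ne_zero)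
  set N := q * g with hNdef
  have hNtri : N.BlockTriangular id := fun i j h => hqtri i j h
  have hNdet : N.det = 1 := by rw [hNdef, Matrix.det_mul, hqdet, hg, one_mul]
  have hNprod : ∏ i, N i i = 1 := by
    rw [← Matrix.det_of_upperTriangular hNtri, hNdet]
  have hNii : ∀ i, N i i ≠ 0 := by
    intro i hzero
    have h0 : ∏ j, N j j = 0 := Finset.prod_eq_zero (Finset.mem_univ i) hzero
    rw [h0] at hNprod
    exact zero_ne_one hNprod
  choose w e hwO hwinvO hfeq using fun i => hfac (N i i) (hNii i)
  have hwne : ∀ i, w i ≠ 0 := fun i h => hNii i (by rw [hfeq i, h, zero_mul])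
  have hprodsplit : (∏ i, w i) * μ (∑ i, e i) = 1 := by
    have h1 : ∏ i, N i i = ∏ i, w i * μ (e i) := Finset.prod_congr rfl fun i _ => hfeq i
    have h2 : ∏ i, (w i * μ (e i)) = (∏ i, w i) * ∏ i, μ (e i) := Finset.prod_mul_distrib
    rw [mu_sum μ hμzero hμadd, ← h2, ← h1, hNprod]
  set W := ∏ i, w i with hWdef
  have hWO : W ∈ O := Subring.prod_mem O fun i _ => hwO i
  have hWinvO : W⁻¹ ∈ O := by
    rw [hWdef, ← Finset.prod_inv_distrib]
    exact Subring.prod_mem O fun i _ => hwinvO i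
  have hμW : μ (∑ i, e i) = W⁻¹ := (inv_eq_of_mul_eq_one_right hprodsplit).symm
  have hμinv : ∀ a, (μ a)⁻¹ = μ (-a) := fun a =>
    inv_eq_of_mul_eq_one_right (by rw [← hμadd, add_neg_cancel, hμzero])
  have hsum0 : (∑ i, e i) = 0 := by
    apply hμrigid
    · rw [hμW]; exact hWinvO
    · rw [← hμinv, hμW, inv_inv]; exact hWO
  have hW1 : W = 1 := by
    have h := hμW
    rw [hsum0, hμzero] at h
    exact inv_eq_one.mp h.symm
  have hqunit : IsUnit q.det := by rw [hqdet]; exact isUnit_one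
  have hqinv_adj : q⁻¹ = q.adjugate := by
    rw [Matrix.inv_def, hqdet, Ring.inverse_one, one_smul]
  set p0 := q⁻¹ * Matrix.diagonal w with hp0def
  set v0 := Matrix.diagonal (fun i => (w i * μ (e i))⁻¹) * N with hv0def
  have hp0O : ∀ i j, p0 i j ∈ O := by
    refine matrix_mul_mem O ?_ ?_
    · intro i j; rw [hqinv_adj]; exact matrix_adjugate_mem O hqO i j
    · intro i j
      rw [Matrix.diagonal_apply]
      split
      · exact hwO _
      · exact O.zero_mem
  have hp0det : p0.det = 1 := by
    rw [hp0def, Matrix.det_mul, Matrix.det_nonsing_inv, hqdet, Ring.inverse_one,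
      Matrix.det_diagonal, ← hWdef, hW1, one_mul]
  have hv0diag : ∀ i, v0 i i = 1 := by
    intro i
    rw [hv0def, Matrix.diagonal_mul]
    rw [show N i i = w i * μ (e i) from hfeq i]
    exact inv_mul_cancel₀ (mul_ne_zero (hwne i) (hμne _))
  have hv0tri : ∀ i j : Fin n, j < i → v0 i j = 0 := by
    intro i j hij
    rw [hv0def, Matrix.diagonal_mul, hqtri i j hij, mul_zero]
  have hdd : Matrix.diagonal w * Matrix.diagonal (fun i => μ (e i))
      * Matrix.diagonal (fun i => (w i * μ (e i))⁻¹) = 1 := by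
    rw [Matrix.diagonal_mul_diagonal, Matrix.diagonal_mul_diagonal]
    rw [show (fun i => w i * μ (e i) * (w i * μ (e i))⁻¹) = fun _ => (1 : F) from
      funext fun i => mul_inv_cancel₀ (mul_ne_zero (hwne i) (hμne _))]
    exact Matrix.diagonal_one
  have main : p0 * Matrix.diagonal (fun i => μ (e i)) * v0 = g := by
    have h1 : p0 * Matrix.diagonal (fun i => μ (e i)) * v0
        = q⁻¹ * ((Matrix.diagonal w * Matrix.diagonal (fun i => μ (e i))
            * Matrix.diagonal (fun i => (w i * μ (e i))⁻¹)) * N) := by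
      rw [hp0def, hv0def]
      simp only [Matrix.mul_assoc]
    rw [h1, hdd, Matrix.one_mul, hNdef, ← Matrix.mul_assoc,
      Matrix.nonsing_inv_mul q hqunit, Matrix.one_mul]
  refine ⟨e, ⟨p0, v0, ⟨hp0O, hp0det⟩, ⟨hv0diag, hv0tri⟩, main.symm⟩, ?_⟩
  rintro e' ⟨p', v', ⟨hp'O, hp'det⟩, hv', heq'⟩
  exact diag_exponents_unique O μ hμzero hμadd hμne hμrigid hp'O hp'det hp0O hp0det
    hv' ⟨hv0diag, hv0tri⟩ (by rw [← heq', main])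

end Generic2

end TwoDimLocal

namespace TwoDimLocal

open Matrix

variable (k : Type) [Field k] {n : ℕ}

/-- The subgroup `P = SL(n, O')`: matrices with all entries in `O'`. -/
def IsP (g : SpecialLinearGroup (Fin n) (K k)) : Prop :=
  ∀ i j : Fin n, g.val i j ∈ Oprime k

/-- Upper triangular unipotent matrices. -/
def IsU (v : Matrix (Fin n) (Fin n) (K k)) : Prop :=
  (∀ i : Fin n, v i i = 1) ∧ ∀ i j : Fin n, j < i → v i j = 0

/-- The diagonal matrix `diag(t^{i₁}u^{j₁}, …, t^{iₙ}u^{jₙ})` attached to a vector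
of exponent pairs `e`. -/
def D (e : Fin n → ℤ × ℤ) : Matrix (Fin n) (Fin n) (K k) :=
  Matrix.diagonal fun i => t k ^ (e i).1 * u k ^ (e i).2

theorem iwasawa_decomposition_aux (g : SpecialLinearGroup (Fin n) (K k)) :
    ∃! e : Fin n → ℤ × ℤ,
      ∃ p : SpecialLinearGroup (Fin n) (K k), ∃ v : Matrix (Fin n) (Fin n) (K k),
        IsP k p ∧ IsU k v ∧ g.val = p.val * D k e * v := by
  classical
  have hO : ∀ x : K k, x ≠ 0 → x ∈ Oprime k ∨ x⁻¹ ∈ Oprime k :=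
    fun x hx => mem_or_inv_mem k hx
  set μ : ℤ × ℤ → K k := fun a => mono k a.1 a.2 with hμdef
  have hμzero : μ 0 = 1 := mono_zero k
  have hμadd : ∀ a b : ℤ × ℤ, μ (a + b) = μ a * μ b :=
    fun a b => (mono_mul k a.1 a.2 b.1 b.2).symm
  have hμne : ∀ a : ℤ × ℤ, μ a ≠ 0 := fun a => mono_ne_zero k a.1 a.2
  have hμrigid : ∀ a : ℤ × ℤ, μ a ∈ Oprime k → μ (-a) ∈ Oprime k → a = 0 := by
    intro a h1 h2
    obtain ⟨hi, hj⟩ := mono_exponents_eq_zero k h1 h2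
    exact Prod.ext hi hj
  have hfac : ∀ x : K k, x ≠ 0 → ∃ w : K k, ∃ a : ℤ × ℤ, w ∈ Oprime k ∧ w⁻¹ ∈ Oprime k ∧
      x = w * μ a := fun x hx => exists_factor k hx
  have hDeq : ∀ e : Fin n → ℤ × ℤ, D k e = Matrix.diagonal (fun i => μ (e i)) :=
    fun e => congrArg Matrix.diagonal (funext fun i => t_zpow_mul_u_zpow k (e i).1 (e i).2)
  have H := generic_iwasawa (Oprime k) hO μ hμzero hμadd hμne hμrigid hfac (g := g.val) (hg := g.prop)
  obtain ⟨e, ⟨p0, v0, ⟨hp0O, hp0det⟩, hv0, hmain⟩, huniq⟩ := H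
  refine ⟨e, ⟨⟨p0, hp0det⟩, v0, ?_, ?_, ?_⟩, ?_⟩
  · exact hp0O
  · exact hv0
  · show g.val = p0 * D k e * v0
    rw [hDeq e]
    exact hmain
  · rintro e' ⟨p', v', hP', hU', heq'⟩
    apply huniq
    refine ⟨p'.val, v', ⟨hP', p'.prop⟩, hU', ?_⟩
    show g.val = p'.val * Matrix.diagonal (fun i => μ (e' i)) * v'
    rw [← hDeq e']
    exact heq'

/-- **Iwasawa decomposition.** Every `g ∈ SL(n, K)` is `p·a·v` with
`p ∈ SL(n, O')`, `a` diagonal with entries `t^{i}u^{j}` and determinant 1, and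
`v` upper triangular unipotent; the diagonal `a` is uniquely determined by `g`. -/
theorem iwasawa_decomposition (hn : 2 ≤ n) (g : SpecialLinearGroup (Fin n) (K k)) :
    ∃! e : Fin n → ℤ × ℤ,
      ∃ p : SpecialLinearGroup (Fin n) (K k), ∃ v : Matrix (Fin n) (Fin n) (K k),
        IsP k p ∧ IsU k v ∧ g.val = p.val * D k e * v :=
  iwasawa_decomposition_aux k g

end TwoDimLocal
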